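/- Let F be a field and G an F*-graph (not necessarily σ-symmetric) with adjacency matrix M on vertex set V. Then the bi-cut-rank function bicutrk(X) := rk(M[X, V\X]) + rk(M[V\X, X]) is symmetric and submodular: bicutrk(X) = bicutrk(V\X) for all X, and bicutrk(X∪Y) + bicutrk(X∩Y) ≤ bicutrk(X) + bicutrk(Y) for all X, Y ⊆ V. -/

import Mathlib

set_option maxHeartbeats 1000000
set_option synthInstance.maxHeartbeats 1000000

noncomputable def rkSub {V W F : Type*} [Fintype V] [Fintype W] [Field F]
    (M : Matrix V W F) (X : Finset V) (Y : Finset W) : ℕ :=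
  (M.submatrix (fun i : X => (i : V)) (fun j : Y => (j : W))).rank

section Aux

open Submodule LinearMap Module Matrix

variable {F V : Type*} [Field F] [Fintype V] [DecidableEq V]

/-- Span of the columns of `M` indexed by `B`. -/
noncomputable def colSpan (M : Matrix V V F) (B : Finset V) : Submodule F (V → F) :=
  Submodule.span F (Set.image Mᵀ (B : Set V))

/-- Coordinate subspace supported on `S`. -/
noncomputable def coordSpan (F : Type*) [Field F] (S : Finset V) : Submodule F (V → F) :=
  Submodule.span F (Set.image (fun i : V => (Pi.single i 1 : V → F)) (S : Set V))

lemma colSpan_sup (M : Matrix V V F) (B C : Finset V) :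
    colSpan M B ⊔ colSpan M C = colSpan M (B ∪ C) := by
  rw [colSpan, colSpan, colSpan, ← Submodule.span_union, Finset.coe_union]
  exact congrArg _ (Set.image_union _ _ _).symm

lemma coordSpan_sup (B C : Finset V) :
    coordSpan F B ⊔ coordSpan F C = coordSpan F (B ∪ C) := by
  rw [coordSpan, coordSpan, coordSpan, ← Submodule.span_union, ← Set.image_union,
    Finset.coe_union]

lemma colSpan_mono {B C : Finset V} (M : Matrix V V F) (h : B ⊆ C) :
    colSpan M B ≤ colSpan M C :=
  Submodule.span_mono (Set.image_mono (by exact_mod_cast h))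

lemma coordSpan_mono {B C : Finset V} (h : B ⊆ C) :
    coordSpan F B ≤ coordSpan F C :=
  Submodule.span_mono (Set.image_mono (by exact_mod_cast h))

/-- The projection `(V → F) → (A → F)`. -/
noncomputable def projA (F : Type*) [Field F] (A : Finset V) : (V → F) →ₗ[F] (↥A → F) :=
  LinearMap.funLeft F F (Subtype.val : ↥A → V)

lemma ker_projA (A : Finset V) : LinearMap.ker (projA F A) = coordSpan F Aᶜ := by
  apply le_antisymm
  · intro v hv
    have hv' : ∀ a ∈ A, v a = 0 := by
      intro a ha
      have := congrFun (LinearMap.mem_ker.mp hv) ⟨a, ha⟩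
      simpa [projA, LinearMap.funLeft] using this
    have hrepr : v = ∑ i ∈ Aᶜ, Pi.single i (v i) := by
      rw [Finset.sum_subset (Finset.subset_univ Aᶜ), Finset.univ_sum_single]
      intro x _ hx
      have : v x = 0 := hv' x (by simpa using hx)
      simp [this]
    rw [hrepr]
    apply Submodule.sum_mem
    intro i hi
    have : (Pi.single i (v i) : V → F) = v i • (Pi.single i 1 : V → F) := by
      ext j
      rcases eq_or_ne j i with rfl | h
      · simp
      · simp [Pi.single_apply, h]
    rw [this]
    exact Submodule.smul_mem _ _ (Submodule.subset_span ⟨i, by simpa using hi, rfl⟩)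
  · rw [coordSpan, Submodule.span_le]
    rintro _ ⟨i, hi, rfl⟩
    simp only [SetLike.mem_coe, LinearMap.mem_ker, projA]
    ext a
    have hiA : i ∉ A := by simpa using hi
    have hne : (a : V) ≠ i := by
      rintro rfl
      exact hiA a.2
    simp [LinearMap.funLeft, Pi.single_apply, hne.symm]

lemma finrank_coordSpan (S : Finset V) :
    finrank F (coordSpan F S) = S.card := by
  have hli : LinearIndependent F (fun i : ↥S => (Pi.single (i : V) 1 : V → F)) := by
    have h := (Pi.basisFun F V).linearIndependent
    have h2 := h.comp (Subtype.val : ↥S → V) Subtype.val_injective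
    have he : (⇑(Pi.basisFun F V) ∘ (Subtype.val : ↥S → V))
        = fun i : ↥S => (Pi.single (i : V) 1 : V → F) := by
      funext i
      simp [Function.comp]
    rwa [he] at h2
  have himg : Set.image (fun i : V => (Pi.single i 1 : V → F)) (S : Set V) =
      Set.range (fun i : ↥S => (Pi.single (i : V) 1 : V → F)) := by
    ext x
    simp
  rw [coordSpan, himg, finrank_span_eq_card hli, Fintype.card_coe]

/-- Key identity: `rk M[A,B] + |A^c| = dim (colSpan B + coordSpan A^c)`. -/
lemma rkSub_add_card (M : Matrix V V F) (A B : Finset V) :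
    rkSub M A B + Aᶜ.card = finrank F ↥(colSpan M B ⊔ coordSpan F Aᶜ) := by
  classical
  have hker : LinearMap.ker (projA F A) = coordSpan F Aᶜ := ker_projA A
  have hsub : Submodule.span F (Set.range
      (M.submatrix (fun i : ↥A => (i : V)) (fun j : ↥B => (j : V)))ᵀ)
      = Submodule.map (projA F A) (colSpan M B) := by
    rw [colSpan, Submodule.map_span]
    congr 1
    ext x
    constructor
    · rintro ⟨j, rfl⟩
      refine ⟨Mᵀ (j : V), ⟨(j : V), j.2, rfl⟩, ?_⟩
      ext i
      simp [projA]
    · rintro ⟨y, ⟨j, hj, rfl⟩, rfl⟩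
      refine ⟨⟨j, hj⟩, ?_⟩
      ext i
      simp [projA]
  have h1 : rkSub M A B = finrank F ↥(Submodule.map (projA F A) (colSpan M B)) := by
    rw [rkSub, Matrix.rank_eq_finrank_span_cols]
    exact congrArg (fun S : Submodule F (↥A → F) => finrank F ↥S) hsub
  have hKle : coordSpan F Aᶜ ≤ colSpan M B ⊔ coordSpan F Aᶜ := le_sup_right
  have hrn := LinearMap.finrank_range_add_finrank_ker
      ((projA F A).domRestrict (colSpan M B ⊔ coordSpan F Aᶜ))
  rw [LinearMap.range_domRestrict, LinearMap.ker_domRestrict, hker] at hrn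
  have hcomap : finrank F ↥(Submodule.comap (colSpan M B ⊔ coordSpan F Aᶜ).subtype
      (coordSpan F Aᶜ)) = finrank F ↥(coordSpan F Aᶜ) :=
    ((Submodule.comapSubtypeEquivOfLe hKle).finrank_eq)
  have hmap : Submodule.map (projA F A) (colSpan M B ⊔ coordSpan F Aᶜ)
      = Submodule.map (projA F A) (colSpan M B) := by
    rw [Submodule.map_sup]
    have hbot : Submodule.map (projA F A) (coordSpan F Aᶜ) = ⊥ := by
      apply le_antisymm _ bot_le
      rintro x ⟨y, hy, rfl⟩
      rw [← hker] at hy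
      simpa using hy
    rw [hbot, sup_bot_eq]
  rw [hmap, hcomap, finrank_coordSpan] at hrn
  rw [h1]
  exact hrn

/-- Submodularity of the cut-rank function. -/
lemma cutrk_submod (M : Matrix V V F) (X Y : Finset V) :
    rkSub M (X ∪ Y) (X ∪ Y)ᶜ + rkSub M (X ∩ Y) (X ∩ Y)ᶜ
      ≤ rkSub M X Xᶜ + rkSub M Y Yᶜ := by
  classical
  have hX := rkSub_add_card M X Xᶜ
  have hY := rkSub_add_card M Y Yᶜ
  have hU := rkSub_add_card M (X ∪ Y) (X ∪ Y)ᶜ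
  have hI := rkSub_add_card M (X ∩ Y) (X ∩ Y)ᶜ
  have hsup : (colSpan M Xᶜ ⊔ coordSpan F Xᶜ) ⊔ (colSpan M Yᶜ ⊔ coordSpan F Yᶜ)
      = colSpan M (X ∩ Y)ᶜ ⊔ coordSpan F (X ∩ Y)ᶜ := by
    rw [Finset.compl_inter, ← colSpan_sup, ← coordSpan_sup]
    exact sup_sup_sup_comm _ _ _ _
  have hinf : colSpan M (X ∪ Y)ᶜ ⊔ coordSpan F (X ∪ Y)ᶜ
      ≤ (colSpan M Xᶜ ⊔ coordSpan F Xᶜ) ⊓ (colSpan M Yᶜ ⊔ coordSpan F Yᶜ) := by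
    rw [Finset.compl_union]
    refine le_inf ?_ ?_
    · exact sup_le_sup (colSpan_mono M Finset.inter_subset_left)
        (coordSpan_mono Finset.inter_subset_left)
    · exact sup_le_sup (colSpan_mono M Finset.inter_subset_right)
        (coordSpan_mono Finset.inter_subset_right)
  have hdim := Submodule.finrank_sup_add_finrank_inf_eq
    (colSpan M Xᶜ ⊔ coordSpan F Xᶜ) (colSpan M Yᶜ ⊔ coordSpan F Yᶜ)
  have hmono : finrank F ↥(colSpan M (X ∪ Y)ᶜ ⊔ coordSpan F (X ∪ Y)ᶜ)
      ≤ finrank F ↥((colSpan M Xᶜ ⊔ coordSpan F Xᶜ) ⊓ (colSpan M Yᶜ ⊔ coordSpan F Yᶜ)) :=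
    Submodule.finrank_mono hinf
  have hcard : Xᶜ.card + Yᶜ.card = (X ∩ Y)ᶜ.card + (X ∪ Y)ᶜ.card := by
    rw [Finset.compl_inter, Finset.compl_union]
    rw [add_comm ((Xᶜ ∪ Yᶜ).card)]
    rw [Finset.card_inter_add_card_union]
  rw [hsup] at hdim
  omega

/-- Rank of a submatrix of the transpose. -/
lemma rkSub_transpose (M : Matrix V V F) (A B : Finset V) :
    rkSub Mᵀ A B = rkSub M B A := by
  rw [rkSub, rkSub, ← Matrix.transpose_submatrix, Matrix.rank_transpose]

end Aux

open Matrix in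
/-- The bi-cut-rank function `X ↦ rk M[X,Xᶜ] + rk M[Xᶜ,X]` is symmetric and submodular. -/
theorem bicutrank_symmetric_submodular {F V : Type*} [Field F] [Fintype V] [DecidableEq V]
    (M : Matrix V V F) (hdiag : ∀ z : V, M z z = 0) :
    (∀ X : Finset V,
      rkSub M X Xᶜ + rkSub M Xᶜ X = rkSub M Xᶜ (Xᶜ)ᶜ + rkSub M (Xᶜ)ᶜ Xᶜ) ∧
    (∀ X Y : Finset V,
      (rkSub M (X ∪ Y) (X ∪ Y)ᶜ + rkSub M (X ∪ Y)ᶜ (X ∪ Y)) +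
      (rkSub M (X ∩ Y) (X ∩ Y)ᶜ + rkSub M (X ∩ Y)ᶜ (X ∩ Y))
        ≤ (rkSub M X Xᶜ + rkSub M Xᶜ X) + (rkSub M Y Yᶜ + rkSub M Yᶜ Y)) := by
  constructor
  · intro X
    rw [compl_compl]
    exact add_comm _ _
  · intro X Y
    have h1 := cutrk_submod M X Y
    have h2 := cutrk_submod Mᵀ X Y
    simp only [rkSub_transpose] at h2
    omega
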